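/- arXiv:2006.14056 — 2 statements merged into one kernel-verified Lean document; each statement's English description precedes it below -/
import Mathlib

section
/- The smooth projection function satisfies the monotonicity property: if ‖φ‖ ≤ c, then (φ̂ − φ)ᵀ P_c^ε(φ̂, μ) ≤ (φ̂ − φ)ᵀ μ for all φ̂, μ ∈ ℝ³. -/
open scoped RealInnerProductSpace

/-- The smooth projection function `P_c^ε(φ̂, μ)`. -/
noncomputable def proj (c ε : ℝ) (φh μ : EuclideanSpace ℝ (Fin 3)) :
    EuclideanSpace ℝ (Fin 3) :=
  if ‖φh‖ < c ∨ (⟪φh, μ⟫ : ℝ) ≤ 0 then μ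
  else μ - (min 1 ((‖φh‖ - c) / ε) * (⟪φh, μ⟫ : ℝ) / ‖φh‖ ^ 2) • φh

theorem proj_monotone (c ε : ℝ) (hc : 0 < c) (hε : 0 < ε)
    (φ : EuclideanSpace ℝ (Fin 3)) (hφ : ‖φ‖ ≤ c)
    (φh μ : EuclideanSpace ℝ (Fin 3)) :
    (⟪φh - φ, proj c ε φh μ⟫ : ℝ) ≤ (⟪φh - φ, μ⟫ : ℝ) := by
  unfold proj
  split_ifs with h
  · exact le_refl _
  push_neg at h
  obtain ⟨hnorm, hpos⟩ := h
  rw [inner_sub_right, inner_smul_right]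
  have hθ : 0 ≤ min 1 ((‖φh‖ - c) / ε) :=
    le_min zero_le_one (div_nonneg (by linarith) hε.le)
  have ht : 0 ≤ min 1 ((‖φh‖ - c) / ε) * (⟪φh, μ⟫ : ℝ) / ‖φh‖ ^ 2 :=
    div_nonneg (mul_nonneg hθ hpos.le) (sq_nonneg _)
  have hip : 0 ≤ (⟪φh - φ, φh⟫ : ℝ) := by
    rw [inner_sub_left, real_inner_self_eq_norm_sq]
    have := real_inner_le_norm φ φh
    nlinarith
  nlinarith [mul_nonneg ht hip]
end

section
/- Let p₁, p₂, p₃, p₄ ∈ ℝ³ be four non-coplanar constant anchors (i.e., p₂ − p₁, p₃ − p₁, p₄ − p₁ are linearly independent), and let αᵢ be weights with Σαᵢ = 1. Then the matrix Σⱼ₌₁⁴ p̄ⱼ p̄ⱼᵀ, with p̄ⱼ := Σᵢ αᵢ(pᵢ − pⱼ), is positive definite. -/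
/-- The differenced anchor vectors `p̄ⱼ := ∑ᵢ αᵢ (pᵢ − pⱼ)`. -/
noncomputable def pbar (anchors : Fin 4 → EuclideanSpace ℝ (Fin 3))
    (α : Fin 4 → ℝ) (j : Fin 4) : EuclideanSpace ℝ (Fin 3) :=
  ∑ i, α i • (anchors i - anchors j)

lemma pbar_diff (anchors : Fin 4 → EuclideanSpace ℝ (Fin 3))
    (α : Fin 4 → ℝ) (hα : ∑ i, α i = 1) (j : Fin 4) :
    pbar anchors α 0 - pbar anchors α j = anchors j - anchors 0 := by
  unfold pbar
  rw [← Finset.sum_sub_distrib]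
  have : ∀ i : Fin 4, α i • (anchors i - anchors 0) - α i • (anchors i - anchors j)
      = α i • (anchors j - anchors 0) := by
    intro i
    rw [← smul_sub]
    congr 1
    abel
  simp_rw [this, ← Finset.sum_smul, hα, one_smul]

theorem four_noncoplanar_anchors_posdef
    (anchors : Fin 4 → EuclideanSpace ℝ (Fin 3))
    (hnc : LinearIndependent ℝ
      ![anchors 1 - anchors 0, anchors 2 - anchors 0, anchors 3 - anchors 0])
    (α : Fin 4 → ℝ) (hα : ∑ i, α i = 1) :
    (∑ j : Fin 4,
      Matrix.of (fun a b : Fin 3 => pbar anchors α j a * pbar anchors α j b)).PosDef := by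
  rw [Matrix.posDef_iff_dotProduct_mulVec]
  constructor
  · unfold Matrix.IsHermitian
    ext a b
    simp [Matrix.conjTranspose, Matrix.sum_apply, mul_comm]
  · intro x hx
    have key : dotProduct (star x) ((∑ j : Fin 4,
        Matrix.of (fun a b : Fin 3 => pbar anchors α j a * pbar anchors α j b)).mulVec x)
        = ∑ j : Fin 4, (∑ a, x a * pbar anchors α j a) ^ 2 := by
      simp only [dotProduct, Matrix.mulVec, Matrix.sum_apply, Matrix.of_apply,
        star_trivial, Finset.mul_sum, Finset.sum_mul]
      conv_lhs => enter [2, a]; rw [Finset.sum_comm]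
      rw [Finset.sum_comm]
      refine Finset.sum_congr rfl fun j _ => ?_
      rw [sq, Finset.sum_mul_sum]
      exact Finset.sum_congr rfl fun a _ => Finset.sum_congr rfl fun b _ => by ring
    rw [key]
    have hnonneg : (0:ℝ) ≤ ∑ j : Fin 4, (∑ a, x a * pbar anchors α j a) ^ 2 :=
      Finset.sum_nonneg fun j _ => sq_nonneg _
    rcases hnonneg.lt_or_eq with h | h
    · exact h
    -- now all inner products vanish; derive contradiction
    exfalso
    have hzero : ∀ j : Fin 4, (∑ a, x a * pbar anchors α j a) = 0 := by
      intro j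
      have := (Finset.sum_eq_zero_iff_of_nonneg
        (fun j _ => sq_nonneg (∑ a, x a * pbar anchors α j a))).mp h.symm j (Finset.mem_univ j)
      exact pow_eq_zero_iff two_ne_zero |>.mp this
    -- x viewed as a Euclidean vector
    set y : EuclideanSpace ℝ (Fin 3) := WithLp.toLp 2 x with hy
    have hinner : ∀ j : Fin 4, inner ℝ (anchors j - anchors 0) y = (0:ℝ) := by
      intro j
      rw [← pbar_diff anchors α hα j]
      have : (inner ℝ (pbar anchors α 0 - pbar anchors α j) y : ℝ)
          = inner ℝ (pbar anchors α 0) y - inner ℝ (pbar anchors α j) y := inner_sub_left _ _ _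
      rw [this]
      have e : ∀ k : Fin 4, (inner ℝ (pbar anchors α k) y : ℝ) = (∑ a, x a * pbar anchors α k a) := by
        intro k
        rw [PiLp.inner_apply]
        exact Finset.sum_congr rfl fun a _ => by simp [hy, mul_comm, RCLike.inner_apply]
      rw [e 0, e j, hzero 0, hzero j, sub_zero]
    have hspan : Submodule.span ℝ (Set.range
        ![anchors 1 - anchors 0, anchors 2 - anchors 0, anchors 3 - anchors 0]) = ⊤ := by
      apply hnc.span_eq_top_of_card_eq_finrank
      simp [finrank_euclideanSpace]
    have hmem : y ∈ (Submodule.span ℝ (Set.range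
        ![anchors 1 - anchors 0, anchors 2 - anchors 0, anchors 3 - anchors 0]))ᗮ := by
      rw [Submodule.mem_orthogonal]
      intro u hu
      induction hu using Submodule.span_induction with
      | mem u hu =>
        obtain ⟨i, rfl⟩ := hu
        fin_cases i
        · exact hinner 1
        · exact hinner 2
        · exact hinner 3
      | zero => simp
      | add u v _ _ h1 h2 => rw [inner_add_left, h1, h2, add_zero]
      | smul c u _ h1 => rw [inner_smul_left, h1, mul_zero]
    rw [hspan, Submodule.top_orthogonal_eq_bot, Submodule.mem_bot] at hmem
    exact hx (congrArg WithLp.ofLp hmem)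
end
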